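/- Let $X_t = \exp(mt + \sigma B_t)$ be GBM starting at 1 with augmented natural filtration $(\mathcal{F}_t)$, let $L^1$ be a random variable independent of $\mathcal{F}_T$ with distribution function $F_{L^1}$, and define $\tau = \inf\{t > 0 : X_t \le L^1\}$ and $M_t = \inf_{0 \le u < t} X_u$. Then for $0 \le t < T$, $\mathbb{P}(\tau > t \mid \mathcal{F}_t) = F_{L^1}(M_t)$ almost surely, where $F_{L^1}(\ell) = \mathbb{P}(L^1 < \ell)$ (the left-continuous CDF evaluated with strict inequality). -/

import Mathlib

open MeasureTheory ProbabilityTheory Real Set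

/-- The standard normal cumulative distribution function. -/
noncomputable def stdNormalCDF (x : ℝ) : ℝ :=
  ((ProbabilityTheory.gaussianReal 0 1) (Set.Iic x)).toReal

/-- The standard normal probability density function. -/
noncomputable def stdNormalPDF (x : ℝ) : ℝ :=
  (Real.sqrt (2 * Real.pi))⁻¹ * Real.exp (-x ^ 2 / 2)

/-- `B` is a standard Brownian motion under `P`: starts at `0`, has continuous paths,
Gaussian increments `B t - B s ~ N(0, t-s)`, and increments independent of the past. -/
structure IsStandardBM {Ω : Type*} [MeasurableSpace Ω] (P : Measure Ω)
    (B : ℝ → Ω → ℝ) : Prop where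
  init : ∀ ω, B 0 ω = 0
  meas : ∀ t, Measurable (B t)
  cont : ∀ ω, Continuous fun t => B t ω
  indep : ∀ s t : ℝ, 0 ≤ s → s ≤ t →
    Indep (MeasurableSpace.comap (fun ω => B t ω - B s ω) inferInstance)
      (⨆ u ∈ Set.Icc (0:ℝ) s, MeasurableSpace.comap (B u) inferInstance) P
  gauss : ∀ s t : ℝ, 0 ≤ s → s ≤ t →
    P.map (fun ω => B t ω - B s ω) = gaussianReal 0 (Real.toNNReal (t - s))

/-- The natural filtration of a process `X` at time `t`: `σ(X u : 0 ≤ u ≤ t)`. -/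
noncomputable def natF {Ω : Type*} (X : ℝ → Ω → ℝ) (t : ℝ) : MeasurableSpace Ω :=
  ⨆ u ∈ Set.Icc (0:ℝ) t, MeasurableSpace.comap (X u) inferInstance

/-- Running minimum of `X` over `[s, t)`, with the convention that it equals `X s`
when the interval is empty. -/
noncomputable def runMin {Ω : Type*} (X : ℝ → Ω → ℝ) (s t : ℝ) (ω : Ω) : ℝ :=
  if t ≤ s then X s ω else sInf ((fun u => X u ω) '' Set.Ico s t)

/-- The default (hitting) time `τ = inf {s > 0 : X s ≤ L s}`, valued in `ENNReal`
(`∞` if no default ever occurs). -/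
noncomputable def hitTime {Ω : Type*} (X : ℝ → Ω → ℝ) (L : ℝ → Ω → ℝ) (ω : Ω) : ENNReal :=
  ⨅ (s : {s : ℝ // 0 < s ∧ X s ω ≤ L s ω}), ENNReal.ofReal s.1


open Topology Filter
set_option linter.unusedSectionVars false
section AuxA

variable {Ω : Type*} [MeasurableSpace Ω]

lemma natF_le {X : ℝ → Ω → ℝ} (hX : ∀ u, Measurable (X u)) (t : ℝ) :
    natF X t ≤ ‹MeasurableSpace Ω› :=
  iSup₂_le fun u _ => measurable_iff_comap_le.mp (hX u)

lemma natF_mono {X : ℝ → Ω → ℝ} {s t : ℝ} (h : s ≤ t) : natF X s ≤ natF X t :=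
  iSup₂_le fun u hu =>
    le_iSup₂ (f := fun (u : ℝ) (_ : u ∈ Set.Icc (0:ℝ) t) =>
      MeasurableSpace.comap (X u) inferInstance) u ⟨hu.1, hu.2.trans h⟩

lemma measurable_natF {X : ℝ → Ω → ℝ} {t u : ℝ} (hu : u ∈ Set.Icc (0:ℝ) t) :
    Measurable[natF X t] (X u) :=
  measurable_iff_comap_le.mpr
    (le_iSup₂ (f := fun (u : ℝ) (_ : u ∈ Set.Icc (0:ℝ) t) =>
      MeasurableSpace.comap (X u) inferInstance) u hu)

/-- lower bound property of runMin -/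
lemma runMin_le_of_mem {X : ℝ → Ω → ℝ} {t : ℝ} (ω : Ω)
    (hc : Continuous fun u => X u ω) {s : ℝ} (hs : s ∈ Set.Ico (0:ℝ) t) :
    runMin X 0 t ω ≤ X s ω := by
  have hts : ¬ t ≤ 0 := not_le.mpr (lt_of_le_of_lt hs.1 hs.2)
  rw [runMin, if_neg hts]
  refine csInf_le ?_ ⟨s, hs, rfl⟩
  refine BddBelow.mono (Set.image_mono Set.Ico_subset_Icc_self) ?_
  exact (isCompact_Icc.image hc).bddBelow

lemma runMin_le_right {X : ℝ → Ω → ℝ} {t : ℝ} (ω : Ω) (ht : 0 ≤ t)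
    (hc : Continuous fun u => X u ω) :
    runMin X 0 t ω ≤ X t ω := by
  rcases eq_or_lt_of_le ht with h|h
  · rw [runMin, ← h, if_pos le_rfl]
  · have hne : (𝓝[Set.Ico (0:ℝ) t] t).NeBot := by
      rw [← mem_closure_iff_nhdsWithin_neBot, closure_Ico h.ne]
      exact ⟨ht, le_rfl⟩
    have htend : Filter.Tendsto (fun u => X u ω) (𝓝[Set.Ico (0:ℝ) t] t) (𝓝 (X t ω)) :=
      (hc.continuousAt).continuousWithinAt
    refine ge_of_tendsto htend ?_
    filter_upwards [self_mem_nhdsWithin] with s hs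
    exact runMin_le_of_mem ω hc hs

/-- `le_runMin`: a uniform lower bound gives a bound on runMin -/
lemma le_runMin {X : ℝ → Ω → ℝ} {t : ℝ} (ω : Ω) (ht : 0 < t) {a : ℝ}
    (h : ∀ s ∈ Set.Ico (0:ℝ) t, a ≤ X s ω) :
    a ≤ runMin X 0 t ω := by
  rw [runMin, if_neg (not_le.mpr ht)]
  refine le_csInf ⟨X 0 ω, ⟨0, ⟨le_rfl, ht⟩, rfl⟩⟩ ?_
  rintro b ⟨s, hs, rfl⟩
  exact h s hs

end AuxA
section AuxB
set_option linter.unusedSectionVars false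

variable {Ω : Type*} [MeasurableSpace Ω]

lemma hit_gt_of_lt_runMin {X : ℝ → Ω → ℝ} {LL : Ω → ℝ} {t : ℝ} (ht : 0 ≤ t) (ω : Ω)
    (hc : Continuous fun u => X u ω)
    (h : LL ω < runMin X 0 t ω) :
    ENNReal.ofReal t < hitTime X (fun _ ω' => LL ω') ω := by
  have hIcc : ∀ s ∈ Set.Icc (0:ℝ) t, LL ω < X s ω := by
    intro s hs
    rcases eq_or_lt_of_le hs.2 with h'|hlt
    · rw [h']; exact h.trans_le (runMin_le_right ω ht hc)
    · exact h.trans_le (runMin_le_of_mem ω hc ⟨hs.1, hlt⟩)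
  have hopen : IsOpen {u : ℝ | LL ω < X u ω} := isOpen_lt continuous_const hc
  obtain ⟨ε, hε, hball⟩ := Metric.isOpen_iff.mp hopen t (hIcc t ⟨ht, le_rfl⟩)
  have hclaim : ∀ s : ℝ, 0 < s → X s ω ≤ LL ω → t + ε/2 ≤ s := by
    intro s hs hXs
    by_contra hcon
    push_neg at hcon
    rcases le_or_gt s t with hst|hst
    · exact absurd hXs (not_le.mpr (hIcc s ⟨hs.le, hst⟩))
    · have : s ∈ Metric.ball t ε := by
        rw [Metric.mem_ball, Real.dist_eq, abs_lt]
        constructor <;> linarith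
      exact absurd hXs (not_le.mpr (hball this))
  have hle : ENNReal.ofReal (t + ε/2) ≤ hitTime X (fun _ ω' => LL ω') ω :=
    le_iInf fun s => ENNReal.ofReal_le_ofReal (hclaim s.1 s.2.1 s.2.2)
  refine lt_of_lt_of_le ?_ hle
  rw [ENNReal.ofReal_lt_ofReal_iff (by linarith)]
  linarith

lemma exists_gt_of_hit_gt {X : ℝ → Ω → ℝ} {LL : Ω → ℝ} {t : ℝ} (ht : 0 ≤ t) (ω : Ω)
    (h : ENNReal.ofReal t < hitTime X (fun _ ω' => LL ω') ω) :
    ∃ u, t < u ∧ ∀ s, 0 < s → s ≤ u → LL ω < X s ω := by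
  by_cases hne : Nonempty {s : ℝ // 0 < s ∧ X s ω ≤ LL ω}
  · set τ := hitTime X (fun _ ω' => LL ω') ω with hτ
    obtain ⟨s₀⟩ := hne
    have hτne : τ ≠ ⊤ :=
      ne_top_of_le_ne_top ENNReal.ofReal_ne_top (iInf_le _ s₀)
    have htτ : t < τ.toReal := by
      rw [← ENNReal.ofReal_lt_iff_lt_toReal ht hτne]; exact h
    refine ⟨(t + τ.toReal)/2, by linarith, fun s hs hsu => ?_⟩
    by_contra hle
    push_neg at hle
    have h1 : τ ≤ ENNReal.ofReal s :=
        iInf_le (fun s' : {s : ℝ // 0 < s ∧ X s ω ≤ LL ω} => ENNReal.ofReal s'.1) ⟨s, hs, hle⟩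
    have h2 : ENNReal.ofReal s < τ := by
      rw [ENNReal.ofReal_lt_iff_lt_toReal hs.le hτne]; linarith
    exact absurd h1 h2.not_ge
  · refine ⟨t+1, by linarith, fun s hs _ => ?_⟩
    by_contra hle
    push_neg at hle
    exact hne ⟨⟨s, hs, hle⟩⟩

lemma one_lt_on_of_not_lt {X : ℝ → Ω → ℝ} {LL : Ω → ℝ} {t : ℝ} (ht : 0 ≤ t) (ω : Ω)
    (hc : Continuous fun u => X u ω) (hX0 : X 0 ω = 1)
    (hsurv : ENNReal.ofReal t < hitTime X (fun _ ω' => LL ω') ω)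
    (hnot : ¬ LL ω < runMin X 0 t ω) :
    ∃ u, 0 < u ∧ ∀ s, 0 < s → s ≤ u → 1 < X s ω := by
  obtain ⟨u, htu, hu⟩ := exists_gt_of_hit_gt ht ω hsurv
  push_neg at hnot
  have hL1 : 1 ≤ LL ω := by
    rcases eq_or_lt_of_le ht with h0t|htpos
    · rw [← h0t] at hnot
      simp only [runMin, if_pos (le_refl (0:ℝ)), hX0] at hnot
      exact hnot
    · by_contra hL
      push_neg at hL
      obtain ⟨s', hs'mem, hs'min⟩ :=
        isCompact_Icc.exists_isMinOn (Set.nonempty_Icc.mpr ht) hc.continuousOn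
      have hs'le : X s' ω ≤ runMin X 0 t ω :=
        le_runMin ω htpos fun s hs => hs'min ⟨hs.1, hs.2.le⟩
      rcases eq_or_lt_of_le hs'mem.1 with h0|h0
      · rw [← h0, hX0] at hs'le
        linarith [hs'le.trans hnot]
      · have := hu s' h0 (hs'mem.2.trans htu.le)
        linarith [hs'le.trans hnot]
  exact ⟨u, lt_of_le_of_lt ht htu, fun s hs hsu => lt_of_le_of_lt hL1 (hu s hs hsu)⟩

lemma mem_Z_of {B : ℝ → Ω → ℝ} {m σ : ℝ} (hσ : 0 < σ) {X : ℝ → Ω → ℝ}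
    (hX : ∀ t ω, X t ω = Real.exp (m * t + σ * B t ω)) (ω : Ω)
    {u : ℝ} (hu : 0 < u) (h : ∀ s, 0 < s → s ≤ u → 1 < X s ω) :
    ∃ K : ℕ, ∀ k, K ≤ k → -(m/σ) * (2:ℝ)⁻¹^k ≤ B ((2:ℝ)⁻¹^k) ω := by
  obtain ⟨K, hK⟩ := exists_pow_lt_of_lt_one hu (by norm_num : (2:ℝ)⁻¹ < 1)
  refine ⟨K, fun k hk => ?_⟩
  have htk : (0:ℝ) < 2⁻¹^k := by positivity
  have htku : (2:ℝ)⁻¹^k ≤ u :=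
    le_trans (pow_le_pow_of_le_one (by norm_num) (by norm_num) hk) hK.le
  have h1 := h _ htk htku
  rw [hX] at h1
  have h2 : 0 < m * (2⁻¹^k) + σ * B (2⁻¹^k) ω := by
    by_contra hcon
    push_neg at hcon
    have := Real.exp_le_one_iff.mpr hcon
    linarith
  have heq : -(m/σ) * ((2:ℝ)⁻¹^k) = (-(m * 2⁻¹^k))/σ := by ring
  rw [heq, div_le_iff₀ hσ]
  nlinarith

end AuxB
section AuxC
set_option linter.unusedSectionVars false

variable {Ω : Type*} [MeasurableSpace Ω]

lemma iIndep_eta {P : Measure Ω} [IsProbabilityMeasure P] {B : ℝ → Ω → ℝ}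
    (hB : IsStandardBM P B) :
    iIndep (fun k : ℕ => MeasurableSpace.comap
      (fun ω => B ((2:ℝ)⁻¹^k) ω - B ((2:ℝ)⁻¹^(k+1)) ω) inferInstance) P := by
  rw [iIndep_iff]
  intro s
  induction s using Finset.strongInduction with
  | _ s ih =>
    intro f hf
    rcases Finset.eq_empty_or_nonempty s with rfl|hs
    · simp
    · set i₀ := s.min' hs with hi₀
      have hmem : i₀ ∈ s := s.min'_mem hs
      have hssub : s.erase i₀ ⊂ s := Finset.erase_ssubset hmem
      have hind := hB.indep ((2:ℝ)⁻¹^(i₀+1)) ((2:ℝ)⁻¹^i₀) (by positivity)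
        (pow_le_pow_of_le_one (by norm_num) (by norm_num) (by omega))
      rw [Indep_iff] at hind
      set F : MeasurableSpace Ω := ⨆ u ∈ Set.Icc (0:ℝ) ((2:ℝ)⁻¹^(i₀+1)),
        MeasurableSpace.comap (B u) inferInstance with hF
      have hBmeas : ∀ v, v ∈ Set.Icc (0:ℝ) ((2:ℝ)⁻¹^(i₀+1)) → Measurable[F] (B v) :=
        fun v hv => measurable_iff_comap_le.mpr
          (le_iSup₂ (f := fun (u : ℝ) (_ : u ∈ Set.Icc (0:ℝ) ((2:ℝ)⁻¹^(i₀+1))) =>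
            MeasurableSpace.comap (B u) inferInstance) v hv)
      have hrest : MeasurableSet[F] (⋂ i ∈ s.erase i₀, f i) := by
        refine MeasurableSet.biInter (Finset.countable_toSet _) fun i hi => ?_
        have hii : i₀ < i :=
          lt_of_le_of_ne (s.min'_le i (Finset.mem_of_mem_erase hi))
            (Ne.symm (Finset.ne_of_mem_erase hi))
        have h1 : ((2:ℝ)⁻¹^i) ∈ Set.Icc (0:ℝ) ((2:ℝ)⁻¹^(i₀+1)) :=
          ⟨by positivity, pow_le_pow_of_le_one (by norm_num) (by norm_num) hii⟩
        have h2 : ((2:ℝ)⁻¹^(i+1)) ∈ Set.Icc (0:ℝ) ((2:ℝ)⁻¹^(i₀+1)) :=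
          ⟨by positivity, pow_le_pow_of_le_one (by norm_num) (by norm_num)
            (by omega)⟩
        have hmeasη : Measurable[F] (fun ω => B ((2:ℝ)⁻¹^i) ω - B ((2:ℝ)⁻¹^(i+1)) ω) :=
          (hBmeas _ h1).sub (hBmeas _ h2)
        obtain ⟨E, hE, hEeq⟩ := MeasurableSpace.measurableSet_comap.mp
          (hf i (Finset.mem_of_mem_erase hi))
        rw [← hEeq]
        exact hmeasη hE
      have key := hind (f i₀) (⋂ i ∈ s.erase i₀, f i) (hf i₀ hmem) hrest
      have hsplit : (⋂ i ∈ s, f i) = f i₀ ∩ ⋂ i ∈ s.erase i₀, f i := by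
        conv_lhs => rw [← Finset.insert_erase hmem]
        rw [Finset.set_biInter_insert]
      rw [hsplit, key,
        ih (s.erase i₀) hssub (fun i hi => hf i (Finset.mem_of_mem_erase hi)),
        ← Finset.mul_prod_erase _ _ hmem]

end AuxC
open scoped NNReal ENNReal

lemma gaussian_Iio_pos : 0 < gaussianReal 0 1 (Set.Iio (-1:ℝ)) := by
  rw [gaussianReal_apply 0 one_ne_zero]
  by_contra hq
  push_neg at hq
  rw [le_zero_iff, lintegral_eq_zero_iff (measurable_gaussianPDF 0 1)] at hq
  have h2 : ∀ᵐ x ∂(volume.restrict (Set.Iio (-1:ℝ))), False := by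
    filter_upwards [hq] with x hx
    exact absurd hx (gaussianPDF_pos 0 one_ne_zero x).ne'
  rw [ae_iff] at h2
  simp only [not_false_iff, Set.setOf_true, Measure.restrict_apply_univ] at h2
  rw [Real.volume_Iio] at h2
  exact ENNReal.top_ne_zero h2

lemma gaussianReal_Ici_le {v : ℝ≥0} (hv : v ≠ 0) {a : ℝ} (ha : -Real.sqrt v ≤ a) :
    gaussianReal 0 v (Set.Ici a) ≤ 1 - gaussianReal 0 1 (Set.Iio (-1:ℝ)) := by
  have hv0 : (0:ℝ) < (v:ℝ) := NNReal.coe_pos.mpr (pos_iff_ne_zero.mpr hv)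
  have hs0 : 0 < Real.sqrt v := Real.sqrt_pos.mpr hv0
  have hmap : (gaussianReal 0 1).map (fun x => Real.sqrt v * x) = gaussianReal 0 v := by
    rw [gaussianReal_map_const_mul (Real.sqrt v)]
    have h2 : (⟨(Real.sqrt (v:ℝ))^2, sq_nonneg _⟩ : ℝ≥0) = v :=
      NNReal.coe_injective (Real.sq_sqrt hv0.le)
    rw [mul_zero, mul_one]; exact congrArg (gaussianReal 0) h2
  have happ : gaussianReal 0 v (Set.Ici a) = gaussianReal 0 1 (Set.Ici (a / Real.sqrt v)) := by
    rw [← hmap, Measure.map_apply (measurable_const_mul _) measurableSet_Ici]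
    congr 1
    ext x
    simp only [Set.mem_preimage, Set.mem_Ici]
    rw [div_le_iff₀ hs0, mul_comm]
  rw [happ]
  have hsub : Set.Ici (a / Real.sqrt v) ⊆ Set.Ici (-1:ℝ) := by
    apply Set.Ici_subset_Ici.mpr
    rw [le_div_iff₀ hs0]
    linarith
  refine le_trans (measure_mono hsub) ?_
  rw [show Set.Ici (-1:ℝ) = (Set.Iio (-1:ℝ))ᶜ from Set.compl_Iio.symm,
    measure_compl measurableSet_Iio (measure_ne_top _ _), measure_univ]

section AuxC2
set_option linter.unusedSectionVars false

variable {Ω : Type*} [MeasurableSpace Ω]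

lemma P_Z_zero {P : Measure Ω} [IsProbabilityMeasure P] {B : ℝ → Ω → ℝ}
    (hB : IsStandardBM P B) (c' : ℝ) :
    P {ω | ∃ K : ℕ, ∀ k, K ≤ k → -c' * (2:ℝ)⁻¹^k ≤ B ((2:ℝ)⁻¹^k) ω} = 0 := by
  classical
  have hcont := hB.cont
  have hinit := hB.init
  set A : ℕ → Set Ω := fun K => {ω | ∀ k, K ≤ k → -c' * (2:ℝ)⁻¹^k ≤ B ((2:ℝ)⁻¹^k) ω} with hA
  have hAmono : Monotone A := fun K K' hK ω hω k hk => hω k (le_trans hK hk)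
  have hZeq : {ω | ∃ K : ℕ, ∀ k, K ≤ k → -c' * (2:ℝ)⁻¹^k ≤ B ((2:ℝ)⁻¹^k) ω} = ⋃ K, A K := by
    ext ω; simp only [hA, Set.mem_iUnion, Set.mem_setOf_eq]
  rw [hZeq]
  set ms : ℕ → MeasurableSpace Ω := fun k => MeasurableSpace.comap
      (fun ω => B ((2:ℝ)⁻¹^k) ω - B ((2:ℝ)⁻¹^(k+1)) ω) inferInstance with hms
  have hle : ∀ k, ms k ≤ ‹MeasurableSpace Ω› := fun k =>
    measurable_iff_comap_le.mp ((hB.meas _).sub (hB.meas _))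
  have htail : MeasurableSet[Filter.limsup ms Filter.atTop] (⋃ K, A K) := by
    rw [Filter.limsup_eq_iInf_iSup_of_nat, MeasurableSpace.measurableSet_iInf]
    intro n
    have hBk : ∀ k, n ≤ k → Measurable[⨆ j, ⨆ (_ : j ≥ n), ms j] (B ((2:ℝ)⁻¹^k)) := by
      intro k hk
      letI mI : MeasurableSpace Ω := ⨆ j, ⨆ (_ : j ≥ n), ms j
      have hηm : ∀ j, n ≤ j → Measurable[⨆ j, ⨆ (_ : j ≥ n), ms j]
          (fun ω => B ((2:ℝ)⁻¹^j) ω - B ((2:ℝ)⁻¹^(j+1)) ω) := by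
        intro j hj
        exact measurable_iff_comap_le.mpr
          (le_iSup₂ (f := fun (j:ℕ) (_ : j ≥ n) => ms j) j hj)
      refine measurable_of_tendsto_metrizable' Filter.atTop
        (fun N => Finset.measurable_sum (Finset.Ico k N)
           (fun j hj => hηm j (le_trans hk (Finset.mem_Ico.mp hj).1)))
        (tendsto_pi_nhds.mpr fun ω => ?_)
      have hptsum : ∀ N, k ≤ N → (∑ j ∈ Finset.Ico k N,
          (B ((2:ℝ)⁻¹^j) ω - B ((2:ℝ)⁻¹^(j+1)) ω))
            = B ((2:ℝ)⁻¹^k) ω - B ((2:ℝ)⁻¹^N) ω := by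
        intro N hN
        rw [Finset.sum_Ico_eq_sub _ hN, Finset.sum_range_sub', Finset.sum_range_sub']
        ring
      have hBN : Filter.Tendsto (fun N : ℕ => B ((2:ℝ)⁻¹^N) ω) Filter.atTop (𝓝 0) := by
        have h1 : Filter.Tendsto (fun N : ℕ => ((2:ℝ)⁻¹)^N) Filter.atTop (𝓝 0) :=
          tendsto_pow_atTop_nhds_zero_of_lt_one (by norm_num) (by norm_num)
        have h2 := ((hcont ω).tendsto 0).comp h1
        rwa [hinit ω] at h2
      have hlim : Filter.Tendsto (fun N => B ((2:ℝ)⁻¹^k) ω - B ((2:ℝ)⁻¹^N) ω)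
          Filter.atTop (𝓝 (B ((2:ℝ)⁻¹^k) ω - 0)) := tendsto_const_nhds.sub hBN
      rw [sub_zero] at hlim
      refine hlim.congr' ?_
      filter_upwards [Filter.eventually_ge_atTop k] with N hN
      exact (hptsum N hN).symm
    have hAn : ∀ K, MeasurableSet[⨆ j, ⨆ (_ : j ≥ n), ms j] (A (K + n)) := by
      intro K
      letI mI : MeasurableSpace Ω := ⨆ j, ⨆ (_ : j ≥ n), ms j
      have hrepr : A (K+n) = ⋂ k, ⋂ (_ : K + n ≤ k),
          (B ((2:ℝ)⁻¹^k)) ⁻¹' (Set.Ici (-c' * (2:ℝ)⁻¹^k)) := by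
        ext ω; simp [hA]
      rw [hrepr]
      exact MeasurableSet.iInter fun k => MeasurableSet.iInter fun hk =>
        (hBk k (by omega)) measurableSet_Ici
    have hUeq : (⋃ K, A K) = ⋃ K, A (K + n) := by
      ext ω
      simp only [Set.mem_iUnion]
      constructor
      · rintro ⟨K, h⟩; exact ⟨K, hAmono (Nat.le_add_right K n) h⟩
      · rintro ⟨K, h⟩; exact ⟨K + n, h⟩
    rw [hUeq]
    letI mI : MeasurableSpace Ω := ⨆ j, ⨆ (_ : j ≥ n), ms j
    exact MeasurableSet.iUnion hAn
  have h01 := measure_zero_or_one_of_measurableSet_limsup_atTop hle (iIndep_eta hB) htail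
  rcases h01 with h0|h1
  · exact h0
  · exfalso
    have hq0 : 0 < gaussianReal 0 1 (Set.Iio (-1:ℝ)) := gaussian_Iio_pos
    have hbound : ∀ K : ℕ, P (A K) ≤ 1 - gaussianReal 0 1 (Set.Iio (-1:ℝ)) := by
      intro K
      obtain ⟨k, hkK, hk1⟩ : ∃ k, K ≤ k ∧ c' * Real.sqrt ((2:ℝ)⁻¹^k) ≤ 1 := by
        rcases le_or_gt c' 0 with hc|hc
        · exact ⟨K, le_rfl,
            le_trans (mul_nonpos_of_nonpos_of_nonneg hc (Real.sqrt_nonneg _)) zero_le_one⟩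
        · obtain ⟨K₁, hK₁⟩ := exists_pow_lt_of_lt_one
            (show (0:ℝ) < (1/c')^2 by positivity) (by norm_num : (2:ℝ)⁻¹ < 1)
          refine ⟨max K K₁, le_max_left _ _, ?_⟩
          have h2 : ((2:ℝ)⁻¹)^(max K K₁) ≤ ((2:ℝ)⁻¹)^K₁ :=
            pow_le_pow_of_le_one (by norm_num) (by norm_num) (le_max_right _ _)
          have h3 : Real.sqrt (((2:ℝ)⁻¹)^(max K K₁)) ≤ 1/c' := by
            rw [show (1/c' : ℝ) = Real.sqrt ((1/c')^2) from (Real.sqrt_sq (by positivity)).symm]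
            exact Real.sqrt_le_sqrt (by linarith)
          calc c' * Real.sqrt (((2:ℝ)⁻¹)^(max K K₁)) ≤ c' * (1/c') := by
                exact mul_le_mul_of_nonneg_left h3 hc.le
            _ = 1 := by field_simp
      have hsub : A K ⊆ (B ((2:ℝ)⁻¹^k)) ⁻¹' (Set.Ici (-c' * (2:ℝ)⁻¹^k)) :=
        fun ω hω => hω k hkK
      have hmap : P.map (B ((2:ℝ)⁻¹^k)) = gaussianReal 0 (Real.toNNReal ((2:ℝ)⁻¹^k)) := by
        have h := hB.gauss 0 ((2:ℝ)⁻¹^k) le_rfl (by positivity)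
        have heq : (fun ω => B ((2:ℝ)⁻¹^k) ω - B 0 ω) = B ((2:ℝ)⁻¹^k) :=
          funext fun ω => by rw [hB.init, sub_zero]
        rw [heq, sub_zero] at h
        exact h
      have hP : P ((B ((2:ℝ)⁻¹^k)) ⁻¹' (Set.Ici (-c' * (2:ℝ)⁻¹^k)))
          = gaussianReal 0 (Real.toNNReal ((2:ℝ)⁻¹^k)) (Set.Ici (-c' * (2:ℝ)⁻¹^k)) := by
        rw [← hmap, Measure.map_apply (hB.meas _) measurableSet_Ici]
      refine le_trans (measure_mono hsub) ?_
      rw [hP]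
      refine gaussianReal_Ici_le ?_ ?_
      · simp only [ne_eq, Real.toNNReal_eq_zero, not_le]
        positivity
      · have hcoe : ((Real.toNNReal ((2:ℝ)⁻¹^k)) : ℝ) = (2:ℝ)⁻¹^k :=
          Real.coe_toNNReal _ (by positivity)
        rw [hcoe]
        have h5 : (2:ℝ)⁻¹^k = Real.sqrt ((2:ℝ)⁻¹^k) * Real.sqrt ((2:ℝ)⁻¹^k) :=
          (Real.mul_self_sqrt (by positivity)).symm
        have h6 : c' * ((2:ℝ)⁻¹^k) ≤ Real.sqrt ((2:ℝ)⁻¹^k) := by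
          calc c' * ((2:ℝ)⁻¹^k)
              = (c' * Real.sqrt ((2:ℝ)⁻¹^k)) * Real.sqrt ((2:ℝ)⁻¹^k) := by
                conv_lhs => rw [h5]
                ring
            _ ≤ 1 * Real.sqrt ((2:ℝ)⁻¹^k) :=
                mul_le_mul_of_nonneg_right hk1 (Real.sqrt_nonneg _)
            _ = Real.sqrt ((2:ℝ)⁻¹^k) := one_mul _
        linarith
    have hPZ : P (⋃ K, A K) ≤ 1 - gaussianReal 0 1 (Set.Iio (-1:ℝ)) := by
      rw [Directed.measure_iUnion (hAmono.directed_le)]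
      exact iSup_le hbound
    rw [h1] at hPZ
    have hlt : (1:ℝ≥0∞) - gaussianReal 0 1 (Set.Iio (-1:ℝ)) < 1 :=
      ENNReal.sub_lt_self ENNReal.one_ne_top one_ne_zero hq0.ne'
    exact absurd hPZ hlt.not_ge

end AuxC2
section AuxD
set_option linter.unusedSectionVars false

variable {Ω : Type*} [MeasurableSpace Ω]

lemma runMin_eq_iInf {X : ℝ → Ω → ℝ} {t : ℝ} (ht : 0 < t)
    (hc : ∀ ω, Continuous fun u => X u ω) (ω : Ω) :
    runMin X 0 t ω = ⨅ q : ℚ, X (if (q:ℝ) ∈ Set.Ico (0:ℝ) t then (q:ℝ) else 0) ω := by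
  set D : ℚ → ℝ := fun q => if (q:ℝ) ∈ Set.Ico (0:ℝ) t then (q:ℝ) else 0 with hD
  have hDmem : ∀ q, D q ∈ Set.Ico (0:ℝ) t := by
    intro q
    by_cases h : (q:ℝ) ∈ Set.Ico (0:ℝ) t
    · rw [show D q = (q:ℝ) from if_pos h]; exact h
    · rw [show D q = (0:ℝ) from if_neg h]; exact ⟨le_rfl, ht⟩
  have hbdd : BddBelow ((fun u => X u ω) '' Set.Ico 0 t) :=
    BddBelow.mono (Set.image_mono Set.Ico_subset_Icc_self)
      (isCompact_Icc.image (hc ω)).bddBelow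
  have hbddD : BddBelow (Set.range fun q : ℚ => X (D q) ω) := by
    refine BddBelow.mono ?_ hbdd
    rintro y ⟨q, rfl⟩
    exact ⟨D q, hDmem q, rfl⟩
  rw [runMin, if_neg (not_le.mpr ht)]
  apply le_antisymm
  · exact le_ciInf fun q => csInf_le hbdd ⟨D q, hDmem q, rfl⟩
  · refine le_csInf ⟨X 0 ω, ⟨0, ⟨le_rfl, ht⟩, rfl⟩⟩ ?_
    rintro y ⟨s, hs, rfl⟩
    by_contra hlt
    push_neg at hlt
    set ε := (⨅ q : ℚ, X (D q) ω) - X s ω with hε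
    have hε0 : 0 < ε := by simp only [hε]; linarith
    obtain ⟨δ, hδ0, hδ⟩ := Metric.continuousAt_iff.mp ((hc ω).continuousAt (x := s)) ε hε0
    obtain ⟨q, hq1, hq2⟩ := exists_rat_btwn (lt_min hs.2 (lt_add_of_pos_right s hδ0))
    have hqI : (q:ℝ) ∈ Set.Ico (0:ℝ) t := ⟨le_trans hs.1 hq1.le, (lt_min_iff.mp hq2).1⟩
    have hDq : D q = (q:ℝ) := if_pos hqI
    have hdist : dist (q:ℝ) s < δ := by
      rw [Real.dist_eq, abs_lt]
      have := (lt_min_iff.mp hq2).2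
      constructor <;> linarith
    have hXd := hδ hdist
    rw [Real.dist_eq, abs_lt] at hXd
    have hi : (⨅ q : ℚ, X (D q) ω) ≤ X (D q) ω := ciInf_le hbddD q
    rw [hDq] at hi
    linarith [hXd.2]

lemma measurable_runMin {X : ℝ → Ω → ℝ} {t : ℝ} (ht : 0 ≤ t)
    (hc : ∀ ω, Continuous fun u => X u ω) :
    Measurable[natF X t] (runMin X 0 t) := by
  rcases eq_or_lt_of_le ht with h0|h0
  · have hrm : runMin X 0 t = X 0 := by
      funext ω; rw [runMin, if_pos (le_of_eq h0.symm)]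
    rw [hrm]
    exact measurable_natF ⟨le_rfl, ht⟩
  · have hrm : runMin X 0 t
        = fun ω => ⨅ q : ℚ, X (if (q:ℝ) ∈ Set.Ico (0:ℝ) t then (q:ℝ) else 0) ω :=
      funext (runMin_eq_iInf h0 hc)
    rw [hrm]
    refine Measurable.iInf fun q => ?_
    apply measurable_natF
    by_cases h : (q:ℝ) ∈ Set.Ico (0:ℝ) t
    · rw [if_pos h]; exact ⟨h.1, h.2.le⟩
    · rw [if_neg h]; exact ⟨le_rfl, ht⟩

end AuxD
section AuxD2
set_option linter.unusedSectionVars false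

lemma key_identity {Ω : Type*} {G : MeasurableSpace Ω} [mΩ : MeasurableSpace Ω]
    {P : Measure Ω} [IsProbabilityMeasure P] (hG : G ≤ mΩ)
    {L : Ω → ℝ} (hLm : Measurable L)
    (hind : Indep (MeasurableSpace.comap L inferInstance) G P)
    {M : Ω → ℝ} (hM : Measurable[G] M)
    {A : Set Ω} (hA : MeasurableSet[G] A) :
    P ({ω | L ω < M ω} ∩ A)
      = ∫⁻ ω, A.indicator (fun ω' => P.map L (Set.Iio (M ω'))) ω ∂P := by
  classical
  rw [Indep_iff] at hind
  set ν : Measure ℝ := P.map L with hν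
  set Y : ℕ → Ω → ℝ := fun n ω => ((⌊2^n * M ω⌋ : ℤ) : ℝ) / 2^n with hY
  have hpow : ∀ n : ℕ, (0:ℝ) < 2^n := fun n => by positivity
  have hYle : ∀ n ω, Y n ω ≤ M ω := by
    intro n ω
    rw [hY]
    simp only
    rw [div_le_iff₀ (hpow n), mul_comm]
    exact Int.floor_le _
  have hYlt : ∀ n ω, M ω < Y n ω + (2:ℝ)⁻¹^n := by
    intro n ω
    have h1 : (2:ℝ)^n * M ω < (⌊2^n * M ω⌋ : ℝ) + 1 := Int.lt_floor_add_one _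
    rw [hY]
    simp only
    rw [show ((2:ℝ)⁻¹)^n = ((2:ℝ)^n)⁻¹ by rw [inv_pow]]
    rw [show ((⌊2^n * M ω⌋ : ℤ) : ℝ) / 2^n + ((2:ℝ)^n)⁻¹
        = ((⌊2^n * M ω⌋ : ℝ) + 1) / 2^n by field_simp]
    rw [lt_div_iff₀ (hpow n), mul_comm]
    exact h1
  have hYmono : ∀ ω, Monotone fun n => Y n ω := by
    intro ω
    refine monotone_nat_of_le_succ fun n => ?_
    rw [hY]
    simp only
    rw [div_le_div_iff₀ (hpow n) (hpow (n+1))]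
    have h2 : (2:ℤ) * ⌊2^n * M ω⌋ ≤ ⌊2^(n+1) * M ω⌋ := by
      rw [Int.le_floor]
      push_cast
      rw [show (2:ℝ)^(n+1) = 2 * 2^n by ring, mul_assoc]
      have := Int.floor_le ((2:ℝ)^n * M ω)
      linarith
    have h2' : ((2:ℤ) * ⌊2^n * M ω⌋ : ℝ) ≤ ((⌊2^(n+1) * M ω⌋ : ℤ) : ℝ) := by exact_mod_cast h2
    push_cast at h2'
    have h3 := mul_le_mul_of_nonneg_right h2' (hpow n).le
    calc ((⌊2^n * M ω⌋ : ℤ) : ℝ) * 2^(n+1) = 2 * ((⌊2^n * M ω⌋ : ℤ) : ℝ) * 2^n := by ring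
      _ ≤ ((⌊2^(n+1) * M ω⌋ : ℤ) : ℝ) * 2^n := h3
  have hYG : ∀ n, Measurable[G] (Y n) := by
    intro n
    have h1 : Measurable fun x : ℝ => ((⌊2^n * x⌋ : ℤ) : ℝ) / 2^n := by
      refine Measurable.div_const ?_ _
      exact measurable_from_top.comp (Int.measurable_floor.comp (measurable_id.const_mul _))
    exact h1.comp hM
  have hYm : ∀ n, Measurable (Y n) := fun n => (hYG n).mono hG le_rfl
  have hMm : Measurable M := hM.mono hG le_rfl
  have hFe : Measurable fun x : ℝ => ν (Set.Iio x) :=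
    Monotone.measurable fun a b hab => measure_mono (Set.Iio_subset_Iio hab)
  -- step identity for each n
  have hstep : ∀ n, P ({ω | L ω < Y n ω} ∩ A)
      = ∫⁻ ω, A.indicator (fun ω' => ν (Set.Iio (Y n ω'))) ω ∂P := by
    intro n
    set c : ℤ → ℝ := fun z => (z:ℝ)/2^n with hc
    have hcinj : Function.Injective c := by
      intro z z' h
      rw [hc] at h
      have h2 : (z:ℝ) = z' := by
        have h3 := congrArg (fun x : ℝ => x * 2^n) h
        simpa [div_mul_cancel₀, (hpow n).ne'] using h3
      exact_mod_cast h2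
    have hYval : ∀ ω, Y n ω = c ⌊2^n * M ω⌋ := fun ω => rfl
    have hUn : {ω | L ω < Y n ω} ∩ A
        = ⋃ z : ℤ, (L ⁻¹' (Set.Iio (c z)) ∩ (A ∩ (Y n) ⁻¹' {c z})) := by
      ext ω
      simp only [Set.mem_inter_iff, Set.mem_setOf_eq, Set.mem_iUnion, Set.mem_preimage,
        Set.mem_Iio, Set.mem_singleton_iff]
      constructor
      · rintro ⟨hL, hAmem⟩
        exact ⟨⌊2^n * M ω⌋, by rw [← hYval ω]; exact hL, hAmem, (hYval ω)⟩
      · rintro ⟨z, hz1, hz2, hz3⟩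
        exact ⟨by rw [hz3]; exact hz1, hz2⟩
    have hdisj : Pairwise (Function.onFun Disjoint
        fun z : ℤ => L ⁻¹' (Set.Iio (c z)) ∩ (A ∩ (Y n) ⁻¹' {c z})) := by
      intro z z' hzz'
      rw [Function.onFun]
      rw [Set.disjoint_left]
      rintro ω ⟨-, -, h1⟩ ⟨-, -, h2⟩
      rw [Set.mem_preimage, Set.mem_singleton_iff] at h1 h2
      exact hzz' (hcinj (h1.symm.trans h2))
    have hmeasz : ∀ z : ℤ, MeasurableSet (L ⁻¹' (Set.Iio (c z)) ∩ (A ∩ (Y n) ⁻¹' {c z})) :=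
      fun z => (hLm measurableSet_Iio).inter
        ((hG _ hA).inter (hYm n (measurableSet_singleton _)))
    rw [hUn, measure_iUnion hdisj hmeasz]
    have hterm : ∀ z : ℤ, P (L ⁻¹' (Set.Iio (c z)) ∩ (A ∩ (Y n) ⁻¹' {c z}))
        = ν (Set.Iio (c z)) * P (A ∩ (Y n) ⁻¹' {c z}) := by
      intro z
      rw [hind _ _ (MeasurableSpace.measurableSet_comap.mpr ⟨Set.Iio (c z), measurableSet_Iio, rfl⟩)
        (hA.inter ((hYG n) (measurableSet_singleton _)))]
      rw [hν, Measure.map_apply hLm measurableSet_Iio]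
    have hfun : ∀ ω, A.indicator (fun ω' => ν (Set.Iio (Y n ω'))) ω
        = ∑' z : ℤ, (A ∩ (Y n) ⁻¹' {c z}).indicator (fun _ => ν (Set.Iio (c z))) ω := by
      intro ω
      by_cases hω : ω ∈ A
      · have hmem : ω ∈ A ∩ (Y n) ⁻¹' {c ⌊2^n * M ω⌋} := ⟨hω, by
          rw [Set.mem_preimage, Set.mem_singleton_iff]⟩
        have hz0 : ∀ z : ℤ, z ≠ ⌊2^n * M ω⌋ →
            (A ∩ (Y n) ⁻¹' {c z}).indicator (fun _ => ν (Set.Iio (c z))) ω = 0 := by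
          intro z hz
          refine Set.indicator_of_notMem ?_ _
          rintro ⟨-, h2⟩
          rw [Set.mem_preimage, Set.mem_singleton_iff, hYval ω] at h2
          exact hz (hcinj h2.symm)
        rw [Set.indicator_of_mem hω, tsum_eq_single _ hz0, Set.indicator_of_mem hmem,
          hYval ω]
      · rw [Set.indicator_of_notMem hω]
        symm
        refine ENNReal.tsum_eq_zero.mpr fun z => Set.indicator_of_notMem (fun h => hω h.1) _
    calc ∑' z : ℤ, P (L ⁻¹' (Set.Iio (c z)) ∩ (A ∩ (Y n) ⁻¹' {c z}))
        = ∑' z : ℤ, ∫⁻ ω, (A ∩ (Y n) ⁻¹' {c z}).indicator (fun _ => ν (Set.Iio (c z))) ω ∂P := by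
          refine tsum_congr fun z => ?_
          rw [lintegral_indicator_const ((hG _ hA).inter (hYm n (measurableSet_singleton _)))]
          exact hterm z
      _ = ∫⁻ ω, ∑' z : ℤ, (A ∩ (Y n) ⁻¹' {c z}).indicator (fun _ => ν (Set.Iio (c z))) ω ∂P := by
          rw [lintegral_tsum fun z => (measurable_const.indicator
            ((hG _ hA).inter (hYm n (measurableSet_singleton _)))).aemeasurable]
      _ = ∫⁻ ω, A.indicator (fun ω' => ν (Set.Iio (Y n ω'))) ω ∂P := by
          refine lintegral_congr fun ω => (hfun ω).symm
  -- limits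
  have hsetU : {ω | L ω < M ω} ∩ A = ⋃ n, ({ω | L ω < Y n ω} ∩ A) := by
    ext ω
    simp only [Set.mem_inter_iff, Set.mem_setOf_eq, Set.mem_iUnion]
    constructor
    · rintro ⟨hLM, hAmem⟩
      obtain ⟨n, hn⟩ := exists_pow_lt_of_lt_one (sub_pos.mpr hLM) (by norm_num : (2:ℝ)⁻¹ < 1)
      exact ⟨n, by linarith [hYlt n ω], hAmem⟩
    · rintro ⟨n, hn, hAmem⟩
      exact ⟨lt_of_lt_of_le hn (hYle n ω), hAmem⟩
  have hmonoU : Monotone fun n => {ω | L ω < Y n ω} ∩ A := by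
    intro n n' hnn'
    exact Set.inter_subset_inter_left _ fun ω hω => lt_of_lt_of_le hω (hYmono ω hnn')
  have hptw : ∀ ω, A.indicator (fun ω' => ν (Set.Iio (M ω'))) ω
      = ⨆ n, A.indicator (fun ω' => ν (Set.Iio (Y n ω'))) ω := by
    intro ω
    by_cases hω : ω ∈ A
    · simp only [Set.indicator_of_mem hω]
      have hU : Set.Iio (M ω) = ⋃ n, Set.Iio (Y n ω) := by
        ext x
        simp only [Set.mem_Iio, Set.mem_iUnion]
        constructor
        · intro hx
          obtain ⟨n, hn⟩ := exists_pow_lt_of_lt_one (sub_pos.mpr hx)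
            (by norm_num : (2:ℝ)⁻¹ < 1)
          exact ⟨n, by linarith [hYlt n ω]⟩
        · rintro ⟨n, hn⟩
          exact lt_of_lt_of_le hn (hYle n ω)
      rw [hU, Directed.measure_iUnion
        (Monotone.directed_le fun a b hab => Set.Iio_subset_Iio (hYmono ω hab))]
    · simp only [Set.indicator_of_notMem hω]
      symm
      simp
  calc P ({ω | L ω < M ω} ∩ A)
      = ⨆ n, P ({ω | L ω < Y n ω} ∩ A) := by
        rw [hsetU, Directed.measure_iUnion hmonoU.directed_le]
    _ = ⨆ n, ∫⁻ ω, A.indicator (fun ω' => ν (Set.Iio (Y n ω'))) ω ∂P := by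
        exact iSup_congr hstep
    _ = ∫⁻ ω, ⨆ n, A.indicator (fun ω' => ν (Set.Iio (Y n ω'))) ω ∂P := by
        refine (lintegral_iSup (fun n => ?_) (fun n n' h ω => ?_)).symm
        · exact (hFe.comp (hYm n)).indicator (hG _ hA)
        · exact Set.indicator_le_indicator (measure_mono (Set.Iio_subset_Iio (hYmono ω h)))
    _ = ∫⁻ ω, A.indicator (fun ω' => ν (Set.Iio (M ω'))) ω ∂P := by
        refine lintegral_congr fun ω => (hptw ω).symm

end AuxD2

theorem cond_survival_up_to_now_C_investor
    {Ω : Type*} [MeasurableSpace Ω] (P : Measure Ω) [IsProbabilityMeasure P]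
    (B : ℝ → Ω → ℝ) (hB : IsStandardBM P B) (m σ : ℝ) (hσ : 0 < σ)
    (X : ℝ → Ω → ℝ) (hX : ∀ t ω, X t ω = Real.exp (m * t + σ * B t ω))
    (L : Ω → ℝ) (hLm : Measurable L) (hLpos : ∀ ω, 0 < L ω)
    (T : ℝ) (hind : Indep (MeasurableSpace.comap L inferInstance) (natF X T) P)
    (t : ℝ) (ht : 0 ≤ t) (htT : t < T) :
    P[Set.indicator {ω | ENNReal.ofReal t < hitTime X (fun _ ω' => L ω') ω}
        (fun _ => (1 : ℝ)) | natF X t] =ᵐ[P]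
      fun ω => (P {ω' | L ω' < runMin X 0 t ω}).toReal := by
  have hmeasX : ∀ u, Measurable (X u) := by
    intro u
    have hXe : X u = fun ω => Real.exp (m * u + σ * B u ω) := funext fun ω => hX u ω
    rw [hXe]
    exact Real.measurable_exp.comp (measurable_const.add (measurable_const.mul (hB.meas u)))
  have hcontX : ∀ ω, Continuous fun u => X u ω := by
    intro ω
    have hXe : (fun u => X u ω) = fun u => Real.exp (m * u + σ * B u ω) :=
      funext fun u => hX u ω
    rw [hXe]
    exact Real.continuous_exp.comp
      ((continuous_const.mul continuous_id).add (continuous_const.mul (hB.cont ω)))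
  have hX0 : ∀ ω, X 0 ω = 1 := fun ω => by rw [hX, hB.init]; norm_num
  have hGle : natF X t ≤ ‹MeasurableSpace Ω› := natF_le hmeasX t
  have hindG : Indep (MeasurableSpace.comap L inferInstance) (natF X t) P :=
    indep_of_indep_of_le_right hind (natF_mono htT.le)
  have hMmG : Measurable[natF X t] (runMin X 0 t) := measurable_runMin ht hcontX
  have hMm : Measurable (runMin X 0 t) := hMmG.mono hGle le_rfl
  set S := {ω | ENNReal.ofReal t < hitTime X (fun _ ω' => L ω') ω} with hS
  set S' := {ω | L ω < runMin X 0 t ω} with hS'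
  have hS'S : S' ⊆ S := fun ω hω => hit_gt_of_lt_runMin ht ω (hcontX ω) hω
  have hZ0 : P {ω | ∃ K:ℕ, ∀ k, K ≤ k → -(m/σ) * (2:ℝ)⁻¹^k ≤ B ((2:ℝ)⁻¹^k) ω} = 0 :=
    P_Z_zero hB (m/σ)
  have hae : S.indicator (fun _ => (1:ℝ)) =ᵐ[P] S'.indicator (fun _ => (1:ℝ)) := by
    rw [Filter.EventuallyEq, ae_iff]
    refine measure_mono_null ?_ hZ0
    intro ω hω
    simp only [Set.mem_setOf_eq] at hω ⊢
    by_contra hcon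
    apply hω
    by_cases h1 : ω ∈ S'
    · rw [Set.indicator_of_mem (hS'S h1), Set.indicator_of_mem h1]
    · by_cases h2 : ω ∈ S
      · obtain ⟨u, hu0, hu⟩ := one_lt_on_of_not_lt ht ω (hcontX ω) (hX0 ω) h2 h1
        exact absurd (mem_Z_of hσ hX ω hu0 hu) hcon
      · rw [Set.indicator_of_notMem h2, Set.indicator_of_notMem h1]
  have hS'meas : MeasurableSet S' := measurableSet_lt hLm hMm
  have hInt : Integrable (S'.indicator fun _ => (1:ℝ)) P := (integrable_const 1).indicator hS'meas
  haveI : IsProbabilityMeasure (P.map L) := Measure.isProbabilityMeasure_map hLm.aemeasurable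
  have hgFe : ∀ ω, P {ω' | L ω' < runMin X 0 t ω} = P.map L (Set.Iio (runMin X 0 t ω)) := by
    intro ω
    rw [Measure.map_apply hLm measurableSet_Iio]
    rfl
  have hFeM : Measurable fun x : ℝ => P.map L (Set.Iio x) :=
    Monotone.measurable fun a b hab => measure_mono (Set.Iio_subset_Iio hab)
  set g : Ω → ℝ := fun ω => (P {ω' | L ω' < runMin X 0 t ω}).toReal with hg
  have hgeq : g = fun ω => (P.map L (Set.Iio (runMin X 0 t ω))).toReal := by
    funext ω; rw [hg]; simp only; rw [hgFe ω]
  have hgG : Measurable[natF X t] g := by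
    rw [hgeq]
    exact ENNReal.measurable_toReal.comp (hFeM.comp hMmG)
  have hgm0 : Measurable g := hgG.mono hGle le_rfl
  have hgb : ∀ ω, ‖g ω‖ ≤ 1 := by
    intro ω
    rw [hg, Real.norm_eq_abs, abs_of_nonneg ENNReal.toReal_nonneg]
    have h1 : P {ω' | L ω' < runMin X 0 t ω} ≤ 1 := prob_le_one
    simpa using ENNReal.toReal_mono ENNReal.one_ne_top h1
  have hgInt : Integrable g P :=
    (integrable_const (1:ℝ)).mono' hgm0.aestronglyMeasurable (ae_of_all _ hgb)
  haveI hsf : SigmaFinite (P.trim hGle) := by infer_instance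
  have hcond : g =ᵐ[P] P[S'.indicator (fun _ => (1:ℝ)) | natF X t] := by
    refine ae_eq_condExp_of_forall_setIntegral_eq hGle hInt
      (fun s _ _ => hgInt.integrableOn) (fun s hs _ => ?_)
      (StronglyMeasurable.aestronglyMeasurable hgG.stronglyMeasurable)
    -- ∫ x in s, g x ∂P = ∫ x in s, ind S' x ∂P
    have hsm0 : MeasurableSet s := hGle _ hs
    have hRHS : ∫ x in s, S'.indicator (fun _ => (1:ℝ)) x ∂P = (P (S' ∩ s)).toReal := by
      rw [integral_indicator_const (1:ℝ) hS'meas, measureReal_def, Measure.restrict_apply hS'meas,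
        smul_eq_mul, mul_one]
    have hkey := key_identity hGle hLm hindG hMmG hs
    have hLHS : ∫ x in s, g x ∂P = (P (S' ∩ s)).toReal := by
      rw [hgeq]
      rw [integral_toReal]
      · congr 1
        rw [hkey, lintegral_indicator hsm0]
      · exact ((hFeM.comp hMm).aemeasurable).restrict
      · exact ae_of_all _ fun ω => measure_lt_top _ _
    rw [hLHS, hRHS]
  exact (condExp_congr_ae hae).trans hcond.symm
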